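/- Let n ≥ 4 and 1 ≤ k ≤ n−3. For 1 ≤ i ≤ n−2−k, define the 1-form λⁱ on ℝⁿ by λⁱ(q) = eᵢ* − q_{i+1} eₙ* (i.e., λⁱ = dz_i − z_{i+1} dz_n), and let Λᵏ = span_{C^∞(ℝⁿ)}{λ¹, …, λ^{n−2−k}}. Then for every q ∈ ℝⁿ, the associated (Cauchy characteristic) space satisfies A(Λᵏ)_q = span_ℝ{e_{n−k}, e_{n−k+1}, …, e_{n−1}}, and consequently the retracting space satisfies C(Λᵏ)_q = span_ℝ{e₁*, …, e_{n−1−k}*, eₙ*}, which contains span_ℝ{λ¹(q), …, λ^{n−2−k}(q)}. -/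

import Mathlib

noncomputable section

/-- Covectors on `ℝⁿ`. -/
abbrev Covector (n : ℕ) := (Fin n → ℝ) →L[ℝ] ℝ

/-- The `j`-th coordinate functional `eⱼ*`. -/
def coproj {n : ℕ} (j : Fin n) : Covector n := ContinuousLinearMap.proj j

/-- The 1-form `λⁱ(q) = eᵢ* − q_{i+1} eₙ*` (0-based index `i`; the `1`-based form
`dz_{i+1} − z_{i+2} dz_n` is `lam n i`); junk value `0` for out-of-range `i`. -/
def lam (n : ℕ) (i : ℕ) (q : Fin n → ℝ) : Covector n :=
  if h : i + 1 < n then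
    coproj ⟨i, by omega⟩ - q ⟨i + 1, h⟩ • coproj ⟨n - 1, by omega⟩
  else 0

/-- The interior product `ι_v dω(q)`, i.e. the covector
`w ↦ dω(q)(v,w) = (Dω(q)(v))(w) − (Dω(q)(w))(v)`. -/
def intExtDer {n : ℕ} (ω : (Fin n → ℝ) → Covector n) (q v : Fin n → ℝ) : Covector n :=
  fderiv ℝ ω q v - (fderiv ℝ ω q).flip v

/-- `span_ℝ{λ¹(q), …, λ^{n−2−k}(q)}` (0-based: `lam n i q` for `i + k + 3 ≤ n`). -/
def lamSpanPt (n k : ℕ) (q : Fin n → ℝ) : Submodule ℝ (Covector n) :=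
  Submodule.span ℝ { ξ | ∃ i : ℕ, i + k + 3 ≤ n ∧ ξ = lam n i q }

/-- The associated (Cauchy characteristic) space `A(Λᵏ)_q` of
`Λᵏ = span_{C^∞}{λ¹, …, λ^{n−2−k}}` at `q`. -/
def assocPt (n k : ℕ) (q : Fin n → ℝ) : Set (Fin n → ℝ) :=
  { v | ∀ i : ℕ, i + k + 3 ≤ n →
      lam n i q v = 0 ∧ intExtDer (lam n i) q v ∈ lamSpanPt n k q }

/-- The retracting space `C(Λᵏ)_q`, the annihilator of `A(Λᵏ)_q`. -/
def retractPt (n k : ℕ) (q : Fin n → ℝ) : Set (Covector n) :=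
  { ξ | ∀ v ∈ assocPt n k q, ξ v = 0 }

lemma coproj_apply {n : ℕ} (j : Fin n) (v : Fin n → ℝ) : coproj j v = v j := rfl

lemma span_apply_zero {n : ℕ} {u : Fin n → ℝ} {s : Set (Covector n)}
    (h : ∀ ξ ∈ s, ξ u = 0) {ξ : Covector n} (hξ : ξ ∈ Submodule.span ℝ s) : ξ u = 0 := by
  induction hξ using Submodule.span_induction with
  | mem y hy => exact h y hy
  | zero => simp
  | add a b _ _ ha hb => simp [ha, hb]
  | smul a y _ hy => simp [hy]

lemma span_coord_zero {n : ℕ} {j : Fin n} {s : Set (Fin n → ℝ)}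
    (h : ∀ x ∈ s, x j = 0) {x} (hx : x ∈ Submodule.span ℝ s) : x j = 0 := by
  induction hx using Submodule.span_induction with
  | mem y hy => exact h y hy
  | zero => simp
  | add a b _ _ ha hb => simp [ha, hb]
  | smul a y _ hy => simp [hy]

lemma lam_eq {n : ℕ} (i : ℕ) (h : i + 1 < n) :
    lam n i = fun q : Fin n → ℝ => coproj ⟨i, by omega⟩ - q ⟨i+1, h⟩ • coproj ⟨n-1, by omega⟩ := by
  funext q; rw [lam, dif_pos h]

lemma lam_apply {n : ℕ} (i : ℕ) (h : i + 1 < n) (q : Fin n → ℝ) :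
    lam n i q = coproj ⟨i, by omega⟩ - q ⟨i+1, h⟩ • coproj ⟨n-1, by omega⟩ := by
  rw [lam, dif_pos h]

lemma fderiv_lam {n : ℕ} (i : ℕ) (h : i + 1 < n) (q : Fin n → ℝ) :
    fderiv ℝ (lam n i) q =
      0 - (ContinuousLinearMap.proj ⟨i+1, h⟩ : (Fin n → ℝ) →L[ℝ] ℝ).smulRight
        (coproj ⟨n-1, by omega⟩) := by
  rw [lam_eq i h]
  have h1 : HasFDerivAt (fun q : Fin n → ℝ => (coproj ⟨i, by omega⟩ : Covector n))
      (0 : (Fin n → ℝ) →L[ℝ] Covector n) q := hasFDerivAt_const _ q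
  have h2 : HasFDerivAt (fun q : Fin n → ℝ => q ⟨i+1, h⟩ • (coproj ⟨n-1, by omega⟩ : Covector n))
      ((ContinuousLinearMap.proj ⟨i+1, h⟩ : (Fin n → ℝ) →L[ℝ] ℝ).smulRight
        (coproj ⟨n-1, by omega⟩)) q :=
    ((ContinuousLinearMap.proj ⟨i+1,h⟩ : (Fin n → ℝ) →L[ℝ] ℝ).hasFDerivAt).smul_const
      (coproj ⟨n-1, by omega⟩ : Covector n)
  exact (h1.sub h2).fderiv

lemma intExtDer_lam {n : ℕ} (i : ℕ) (h : i + 1 < n) (q v : Fin n → ℝ) :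
    intExtDer (lam n i) q v =
      v ⟨n-1, by omega⟩ • coproj ⟨i+1, h⟩ - v ⟨i+1, h⟩ • coproj ⟨n-1, by omega⟩ := by
  ext w
  simp [intExtDer, fderiv_lam i h, coproj, ContinuousLinearMap.flip_apply]
  ring

lemma pi_sum {n : ℕ} (v : Fin n → ℝ) : ∑ j, v j • (Pi.single j 1 : Fin n → ℝ) = v := by
  funext a
  simp [Finset.sum_apply, Pi.single_apply]

/-- For `n ≥ 4`, `1 ≤ k ≤ n−3` and every `q ∈ ℝⁿ`:
`A(Λᵏ)_q = span_ℝ{e_{n−k}, …, e_{n−1}}` (1-based indices; 0-based `n−1−k, …, n−2`) and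
`C(Λᵏ)_q = span_ℝ{e₁*, …, e_{n−1−k}*, eₙ*}`, which contains each `λⁱ(q)`. -/
theorem assoc_retract_spaces (n k : ℕ) (hn : 4 ≤ n) (hk1 : 1 ≤ k) (hk2 : k + 3 ≤ n)
    (q : Fin n → ℝ) :
    assocPt n k q =
      ↑(Submodule.span ℝ { w : Fin n → ℝ |
          ∃ j : Fin n, n ≤ j.1 + k + 1 ∧ j.1 + 2 ≤ n ∧ w = Pi.single j (1 : ℝ) }) ∧
    retractPt n k q =
      ↑(Submodule.span ℝ { ξ : Covector n |
          ∃ j : Fin n, (j.1 + k + 2 ≤ n ∨ j.1 + 1 = n) ∧ ξ = coproj j }) ∧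
    ∀ i : ℕ, i + k + 3 ≤ n →
      lam n i q ∈ Submodule.span ℝ { ξ : Covector n |
          ∃ j : Fin n, (j.1 + k + 2 ≤ n ∨ j.1 + 1 = n) ∧ ξ = coproj j } := by
  set Sgen : Set (Fin n → ℝ) :=
    { w | ∃ j : Fin n, n ≤ j.1 + k + 1 ∧ j.1 + 2 ≤ n ∧ w = Pi.single j (1 : ℝ) } with hSgen
  set Tgen : Set (Covector n) :=
    { ξ | ∃ j : Fin n, (j.1 + k + 2 ≤ n ∨ j.1 + 1 = n) ∧ ξ = coproj j } with hTgen
  have hmid : n - k - 3 + 1 < n := by omega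
  have hlastf : n - 1 < n := by omega
  -- A = span S
  have hA : assocPt n k q = ↑(Submodule.span ℝ Sgen) := by
    apply Set.Subset.antisymm
    · intro v hv
      -- first : v at last coordinate and at n-k-2 vanish
      obtain ⟨-, hm⟩ := hv (n - k - 3) (by omega)
      rw [intExtDer_lam _ hmid] at hm
      have hgen1 : ∀ ξ ∈ { ξ : Covector n | ∃ i : ℕ, i + k + 3 ≤ n ∧ ξ = lam n i q },
          ξ (Pi.single ⟨n - k - 3 + 1, hmid⟩ (1:ℝ)) = 0 := by
        rintro ξ ⟨m, hm3, rfl⟩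
        have h1 : (⟨m, by omega⟩ : Fin n) ≠ ⟨n - k - 3 + 1, hmid⟩ := by
          simp only [ne_eq, Fin.mk.injEq]; omega
        have h2 : (⟨n - 1, by omega⟩ : Fin n) ≠ ⟨n - k - 3 + 1, hmid⟩ := by
          simp only [ne_eq, Fin.mk.injEq]; omega
        rw [lam_apply m (by omega)]
        simp [coproj, Pi.single_apply, h1, h2]
      have hval1 := span_apply_zero hgen1 hm
      have hvlast : v ⟨n - 1, hlastf⟩ = 0 := by
        have h2 : (⟨n - 1, by omega⟩ : Fin n) ≠ ⟨n - k - 3 + 1, hmid⟩ := by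
          simp only [ne_eq, Fin.mk.injEq]; omega
        simpa [coproj, Pi.single_apply, h2] using hval1
      -- second test vector
      set u2 : Fin n → ℝ := fun j =>
        if hj : j.1 + k + 3 ≤ n then q ⟨j.1 + 1, by omega⟩
        else if j.1 + 1 = n then 1 else 0 with hu2
      have hu2last : u2 ⟨n - 1, hlastf⟩ = 1 := by
        rw [hu2]; simp only []
        rw [dif_neg (by omega), if_pos (by omega)]
      have hu2mid : u2 ⟨n - k - 3 + 1, hmid⟩ = 0 := by
        rw [hu2]; simp only []
        rw [dif_neg (by omega), if_neg (by omega)]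
      have hgen2 : ∀ ξ ∈ { ξ : Covector n | ∃ i : ℕ, i + k + 3 ≤ n ∧ ξ = lam n i q },
          ξ u2 = 0 := by
        rintro ξ ⟨m, hm3, rfl⟩
        rw [lam_apply m (by omega)]
        have hm' : u2 ⟨m, by omega⟩ = q ⟨m + 1, by omega⟩ := by
          rw [hu2]; simp only []
          rw [dif_pos (by simpa using hm3)]
        simp [coproj, hm', hu2last]
      have hval2 := span_apply_zero hgen2 hm
      have hvmid : v ⟨n - k - 3 + 1, hmid⟩ = 0 := by
        simp only [ContinuousLinearMap.sub_apply, ContinuousLinearMap.smul_apply,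
          coproj_apply, smul_eq_mul, hu2last, hu2mid, mul_zero, mul_one, zero_sub,
          neg_eq_zero, hvlast, zero_mul] at hval2
        exact hval2
      have hzero : ∀ j : Fin n, ¬(n ≤ j.1 + k + 1 ∧ j.1 + 2 ≤ n) → v j = 0 := by
        intro j hj
        rcases (by omega : j.1 + k + 3 ≤ n ∨ j.1 = n - k - 2 ∨ j.1 = n - 1) with h1 | h1 | h1
        · obtain ⟨hl, -⟩ := hv j.1 h1
          rw [lam_apply j.1 (by omega)] at hl
          have hjj : (⟨j.1, by omega⟩ : Fin n) = j := Fin.ext rfl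
          simp only [ContinuousLinearMap.sub_apply, ContinuousLinearMap.smul_apply,
            coproj_apply, smul_eq_mul, hjj, hvlast, mul_zero, sub_zero] at hl
          exact hl
        · have : j = ⟨n - k - 3 + 1, hmid⟩ := Fin.ext (by simp only [Fin.val_mk]; omega)
          rw [this]; exact hvmid
        · have : j = ⟨n - 1, hlastf⟩ := Fin.ext (by simp only [Fin.val_mk]; omega)
          rw [this]; exact hvlast
      rw [← pi_sum v]
      apply Submodule.sum_mem
      intro j _
      by_cases hj : n ≤ j.1 + k + 1 ∧ j.1 + 2 ≤ n
      · exact Submodule.smul_mem _ _ (Submodule.subset_span ⟨j, hj.1, hj.2, rfl⟩)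
      · rw [hzero j hj]; simp
    · intro v hv
      induction hv using Submodule.span_induction with
      | mem w hw =>
        obtain ⟨j, hj1, hj2, rfl⟩ := hw
        intro i hi
        have h : i + 1 < n := by omega
        have hne1 : (⟨i, by omega⟩ : Fin n) ≠ j := by
          simp only [ne_eq, Fin.ext_iff]; omega
        have hne2 : (⟨i + 1, h⟩ : Fin n) ≠ j := by
          simp only [ne_eq, Fin.ext_iff]; omega
        have hne3 : (⟨n - 1, by omega⟩ : Fin n) ≠ j := by
          simp only [ne_eq, Fin.ext_iff]; omega
        constructor
        · rw [lam_apply i h]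
          simp [coproj, Pi.single_apply, hne1, hne3]
        · have : intExtDer (lam n i) q (Pi.single j (1:ℝ)) = 0 := by
            rw [intExtDer_lam i h]
            simp [Pi.single_apply, hne2, hne3]
          rw [this]; exact zero_mem _
      | zero =>
        intro i hi
        refine ⟨map_zero _, ?_⟩
        have : intExtDer (lam n i) q 0 = 0 := by simp [intExtDer]
        rw [this]; exact zero_mem _
      | add x y _ _ hx hy =>
        intro i hi
        obtain ⟨hx1, hx2⟩ := hx i hi
        obtain ⟨hy1, hy2⟩ := hy i hi
        refine ⟨by rw [map_add, hx1, hy1, add_zero], ?_⟩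
        have : intExtDer (lam n i) q (x + y)
            = intExtDer (lam n i) q x + intExtDer (lam n i) q y := by
          simp only [intExtDer, map_add]; abel
        rw [this]; exact add_mem hx2 hy2
      | smul a x _ hx =>
        intro i hi
        obtain ⟨hx1, hx2⟩ := hx i hi
        refine ⟨by rw [map_smul, hx1, smul_zero], ?_⟩
        have : intExtDer (lam n i) q (a • x) = a • intExtDer (lam n i) q x := by
          simp only [intExtDer, map_smul, smul_sub]
        rw [this]; exact Submodule.smul_mem _ _ hx2
  refine ⟨hA, ?_, ?_⟩
  · apply Set.Subset.antisymm
    · intro ξ hξ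
      have hrep : ξ = ∑ j, ξ (Pi.single j 1) • coproj j := by
        ext w
        conv_lhs => rw [← pi_sum w]
        rw [map_sum, ContinuousLinearMap.sum_apply]
        refine Finset.sum_congr rfl fun j _ => ?_
        simp [coproj_apply, mul_comm]
      rw [hrep]
      apply Submodule.sum_mem
      intro j _
      by_cases hj : j.1 + k + 2 ≤ n ∨ j.1 + 1 = n
      · exact Submodule.smul_mem _ _ (Submodule.subset_span ⟨j, hj, rfl⟩)
      · have hmem : (Pi.single j (1:ℝ) : Fin n → ℝ) ∈ assocPt n k q := by
          rw [hA]
          exact Submodule.subset_span ⟨j, by omega, by omega, rfl⟩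
        rw [hξ _ hmem]
        simp
    · intro ξ hξ v hv
      rw [hA] at hv
      refine span_apply_zero ?_ hξ
      rintro η ⟨j, hj, rfl⟩
      refine span_coord_zero ?_ hv
      rintro x ⟨j', hj1, hj2, rfl⟩
      have : j ≠ j' := by simp only [ne_eq, Fin.ext_iff]; omega
      simp [Pi.single_apply, this]
  · intro i hi
    have h : i + 1 < n := by omega
    rw [lam_apply i h]
    refine sub_mem (Submodule.subset_span ⟨⟨i, by omega⟩, Or.inl (by simp only [Fin.val_mk]; omega), rfl⟩)
      (Submodule.smul_mem _ _
        (Submodule.subset_span ⟨⟨n - 1, by omega⟩, Or.inr (by simp only [Fin.val_mk]; omega), rfl⟩))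


end
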